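/- If T is a mixing automorphism, then for all measurable sets A,B,C and every ε > 0, the quantity dev(h) = |Der(ε,A,B,C,h)|/h is bounded in h, where Der(ε,A,B,C,h) is the set of pairs (z,w) ∈ Q(ε,h) with |μ(A ∩ T^z B ∩ T^w C) − μ(A)μ(B)μ(C)| > ε and Q(ε,h) = {(z,w) ∈ [0,h]² ∩ ℤ² : |z|, |w|, |z−w| > εh}. -/

import Mathlib

open MeasureTheory Filter

/-- The set `Q(ε,h)` of pairs `(z,w) ∈ [0,h]²` with `|z|, |w|, |z−w| > εh`. -/
def Qset (ε : ℝ) (h : ℕ) : Set (ℕ × ℕ) :=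
  {p : ℕ × ℕ | p.1 ≤ h ∧ p.2 ≤ h ∧ (p.1 : ℝ) > ε * h ∧ (p.2 : ℝ) > ε * h ∧
    |(p.1 : ℝ) - (p.2 : ℝ)| > ε * h}

/-- The set of deviations from double mixing in `Q(ε,h)`. -/
def Der {X : Type*} [MeasurableSpace X] (μ : Measure X) (T : X → X)
    (ε : ℝ) (A B C : Set X) (h : ℕ) : Set (ℕ × ℕ) :=
  {p ∈ Qset ε h |
    |(μ (A ∩ T^[p.1] '' B ∩ T^[p.2] '' C)).toReal
      - (μ A).toReal * (μ B).toReal * (μ C).toReal| > ε}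

section helpers

variable {X : Type*} [MeasurableSpace X] {μ : Measure X}

lemma iter_img_eq (T : X ≃ᵐ X) (E : Set X) (z : ℕ) :
    (⇑T)^[z+1] '' E = ⇑T '' ((⇑T)^[z] '' E) := by
  rw [Function.iterate_succ', Set.image_comp]

lemma iter_img_meas (T : X ≃ᵐ X) {E : Set X} (hE : MeasurableSet E) (z : ℕ) :
    MeasurableSet ((⇑T)^[z] '' E) := by
  induction z with
  | zero => simpa using hE
  | succ n ih =>
      rw [iter_img_eq, MeasurableEquiv.image_eq_preimage_symm]
      exact T.symm.measurable ih

lemma iter_img_measure (T : X ≃ᵐ X) (hT : MeasurePreserving T μ μ) {E : Set X}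
    (hE : MeasurableSet E) (z : ℕ) : μ ((⇑T)^[z] '' E) = μ E := by
  induction z with
  | zero => simp
  | succ n ih =>
      rw [iter_img_eq, MeasurableEquiv.image_eq_preimage_symm,
        (hT.symm T).measure_preimage (iter_img_meas T hE n).nullMeasurableSet, ih]

lemma iter_shift (T : X ≃ᵐ X) (hT : MeasurePreserving T μ μ) {E F : Set X}
    (hE : MeasurableSet E) (hF : MeasurableSet F) (z d : ℕ) :
    μ ((⇑T)^[z] '' E ∩ (⇑T)^[z+d] '' F) = μ (E ∩ (⇑T)^[d] '' F) := by
  have h1 : (⇑T)^[z+d] '' F = (⇑T)^[z] '' ((⇑T)^[d] '' F) := by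
    rw [← Set.image_comp, ← Function.iterate_add]
  have hinj : Function.Injective ((⇑T)^[z]) := T.injective.iterate z
  rw [h1, ← Set.image_inter hinj,
    iter_img_measure T hT (hE.inter (iter_img_meas T hF d)) z]

end helpers

/-- Core L²-Cauchy–Schwarz counting lemma: if a family of sets `S z` (all of measure `b`)
has correlations close to `b*b` at distance `≥ D₀`, then the number of integers `z`
at which `μ (W ∩ S z)` deviates from `b * μ W` by at least `ε/2` (with a fixed sign `σ`)
is bounded. -/
lemma core_bound {X : Type*} [MeasurableSpace X] (μ : Measure X) [IsProbabilityMeasure μ]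
    (S : ℕ → Set X) (hS : ∀ z, MeasurableSet (S z)) (W : Set X) (hW : MeasurableSet W)
    (b : ℝ) (hb0 : 0 ≤ b) (hb1 : b ≤ 1) (hbz : ∀ z, (μ (S z)).toReal = b)
    (ε : ℝ) (hε : 0 < ε) (D₀ : ℕ)
    (hfar : ∀ z z' : ℕ, z + D₀ ≤ z' → |(μ (S z ∩ S z')).toReal - b * b| ≤ ε ^ 2 / 8)
    (σ : ℝ) (hσ : σ = 1 ∨ σ = -1) (Z : Finset ℕ)
    (ha : ∀ z ∈ Z, ε / 2 ≤ σ * ((μ (W ∩ S z)).toReal - b * (μ W).toReal)) :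
    (Z.card : ℝ) ≤ (2 * (D₀ : ℝ) + 1) * 8 / ε ^ 2 := by
  classical
  set c : ℝ := (Z.card : ℝ) with hc
  have hc0 : 0 ≤ c := Nat.cast_nonneg _
  -- indicator functions
  set ind : Set X → X → ℝ := fun E x => E.indicator (fun _ => (1:ℝ)) x with hind_def
  have hind_int : ∀ (E : Set X), MeasurableSet E → Integrable (ind E) μ :=
    fun E hE => (integrable_const (1:ℝ)).indicator hE
  have hind_meas : ∀ (E : Set X), MeasurableSet E → Measurable (ind E) :=
    fun E hE => measurable_const.indicator hE
  have hind_val : ∀ (E : Set X) (x : X), ind E x = if x ∈ E then 1 else 0 := by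
    intro E x; simp [hind_def, Set.indicator]
  have hind_intgl : ∀ (E : Set X), MeasurableSet E → ∫ x, ind E x ∂μ = (μ E).toReal := by
    intro E hE
    rw [hind_def]
    simpa [measureReal_def] using integral_indicator_const (1:ℝ) hE
  set f : ℕ → X → ℝ := fun z x => ind (S z) x - b with hf_def
  have hf_int : ∀ z, Integrable (f z) μ := fun z => (hind_int _ (hS z)).sub (integrable_const b)
  have hf_meas : ∀ z, Measurable (f z) := fun z => (hind_meas _ (hS z)).sub measurable_const
  have hf_bd : ∀ z x, ‖f z x‖ ≤ 1 + |b| := by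
    intro z x
    rw [hf_def]
    simp only [Real.norm_eq_abs]
    have := abs_sub (ind (S z) x) b
    have h01 : |ind (S z) x| ≤ 1 := by
      rw [hind_val]; split <;> simp
    calc |ind (S z) x - b| ≤ |ind (S z) x| + |b| := abs_sub _ _
      _ ≤ 1 + |b| := by linarith
  -- products of f's are integrable
  have hff_int : ∀ z z', Integrable (fun x => f z x * f z' x) μ := by
    intro z z'
    exact (hf_int z').bdd_mul (hf_meas z).aestronglyMeasurable (ae_of_all _ (hf_bd z))
  -- Gram matrix entries
  have hgram : ∀ z z', ∫ x, f z x * f z' x ∂μ = (μ (S z ∩ S z')).toReal - b * b := by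
    intro z z'
    have hpt : (fun x => f z x * f z' x)
        = fun x => ((ind (S z ∩ S z') x - b * ind (S z) x) - b * ind (S z') x) + b * b := by
      funext x
      rw [hf_def]
      simp only
      rw [hind_val, hind_val, hind_val]
      by_cases h1 : x ∈ S z <;> by_cases h2 : x ∈ S z' <;>
        simp [h1, h2, Set.mem_inter_iff] <;> ring
    rw [hpt]
    have i1 : Integrable (fun x => ind (S z ∩ S z') x) μ := hind_int _ ((hS z).inter (hS z'))
    have i2 : Integrable (fun x => b * ind (S z) x) μ := (hind_int _ (hS z)).const_mul b
    have i3 : Integrable (fun x => b * ind (S z') x) μ := (hind_int _ (hS z')).const_mul b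
    have i12 : Integrable (fun x => ind (S z ∩ S z') x - b * ind (S z) x) μ := i1.sub i2
    have i123 : Integrable (fun x => ind (S z ∩ S z') x - b * ind (S z) x - b * ind (S z') x) μ :=
      i12.sub i3
    rw [integral_add i123 (integrable_const (b*b)), integral_sub i12 i3,
      integral_sub i1 i2, integral_const_mul, integral_const_mul,
      hind_intgl _ ((hS z).inter (hS z')), hind_intgl _ (hS z), hind_intgl _ (hS z'),
      hbz, hbz]
    simp [measure_univ]
  -- a_z values
  set av : ℕ → ℝ := fun z => (μ (W ∩ S z)).toReal - b * (μ W).toReal with hav_def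
  have hWf_pt : ∀ z, (fun x => ind W x * f z x) = fun x => ind (W ∩ S z) x - b * ind W x := by
    intro z
    funext x
    rw [hf_def]
    simp only
    rw [hind_val, hind_val, hind_val]
    by_cases h1 : x ∈ W <;> by_cases h2 : x ∈ S z <;>
      simp [h1, h2, Set.mem_inter_iff] <;> ring
  have hWf_int : ∀ z, Integrable (fun x => ind W x * f z x) μ := by
    intro z
    rw [hWf_pt]
    exact (hind_int _ (hW.inter (hS z))).sub ((hind_int _ hW).const_mul b)
  have hWf_intgl : ∀ z, ∫ x, ind W x * f z x ∂μ = av z := by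
    intro z
    have j1 : Integrable (fun x => ind (W ∩ S z) x) μ := hind_int _ (hW.inter (hS z))
    have j2 : Integrable (fun x => b * ind W x) μ := (hind_int _ hW).const_mul b
    rw [hWf_pt, integral_sub j1 j2, integral_const_mul,
      hind_intgl _ (hW.inter (hS z)), hind_intgl _ hW]
  -- G and its integrals
  set G : X → ℝ := fun x => ∑ z ∈ Z, f z x with hG_def
  have hG_int : Integrable G μ := integrable_finset_sum _ (fun z _ => hf_int z)
  have hG_meas : Measurable G := by
    rw [hG_def]; exact Finset.measurable_sum _ (fun z _ => hf_meas z)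
  have hG_bd : ∀ x, ‖G x‖ ≤ c * (1 + |b|) := by
    intro x
    calc ‖G x‖ ≤ ∑ z ∈ Z, ‖f z x‖ := norm_sum_le _ _
      _ ≤ ∑ z ∈ Z, (1 + |b|) := Finset.sum_le_sum (fun z _ => hf_bd z x)
      _ = c * (1 + |b|) := by rw [Finset.sum_const, nsmul_eq_mul]
  have hGG_int : Integrable (fun x => G x * G x) μ :=
    hG_int.bdd_mul hG_meas.aestronglyMeasurable (ae_of_all _ hG_bd)
  have hWG_int : Integrable (fun x => ind W x * G x) μ := by
    have : (fun x => ind W x * G x) = fun x => ∑ z ∈ Z, ind W x * f z x := by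
      funext x; rw [hG_def]; simp only; rw [Finset.mul_sum]
    rw [this]
    exact integrable_finset_sum _ (fun z _ => hWf_int z)
  set Q : ℝ := ∑ z ∈ Z, av z with hQ_def
  have hWG_intgl : ∫ x, ind W x * G x ∂μ = Q := by
    have : (fun x => ind W x * G x) = fun x => ∑ z ∈ Z, ind W x * f z x := by
      funext x; rw [hG_def]; simp only; rw [Finset.mul_sum]
    rw [this, integral_finset_sum _ (fun z _ => hWf_int z)]
    exact Finset.sum_congr rfl (fun z _ => hWf_intgl z)
  set P : ℝ := ∫ x, G x * G x ∂μ with hP_def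
  -- Cauchy-Schwarz via the quadratic trick: Q^2 ≤ P
  have hR1 : (μ W).toReal ≤ 1 := by
    have := prob_le_one (μ := μ) (s := W)
    simpa using ENNReal.toReal_mono (by simp) this
  have hR0 : 0 ≤ (μ W).toReal := ENNReal.toReal_nonneg
  have hQP : Q * Q ≤ P := by
    have hnn : 0 ≤ ∫ x, (G x - Q * ind W x) ^ 2 ∂μ := integral_nonneg (fun x => sq_nonneg _)
    have hexp : (fun x => (G x - Q * ind W x) ^ 2)
        = fun x => (G x * G x - (2 * Q) * (ind W x * G x)) + (Q * Q) * ind W x := by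
      funext x
      rw [hind_val]
      by_cases h1 : x ∈ W <;> simp [h1] <;> ring
    have k1 : Integrable (fun x => (2 * Q) * (ind W x * G x)) μ := hWG_int.const_mul (2*Q)
    have k2 : Integrable (fun x => G x * G x - (2 * Q) * (ind W x * G x)) μ := hGG_int.sub k1
    have k3 : Integrable (fun x => (Q * Q) * ind W x) μ := (hind_int _ hW).const_mul (Q*Q)
    rw [hexp, integral_add k2 k3, integral_sub hGG_int k1, integral_const_mul, integral_const_mul,
      hWG_intgl, hind_intgl _ hW] at hnn
    nlinarith [sq_nonneg Q]
  -- lower bound on |Q|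
  have hQlow : c * (ε / 2) ≤ σ * Q := by
    rw [hQ_def, Finset.mul_sum]
    calc c * (ε / 2) = ∑ _z ∈ Z, (ε / 2) := by rw [Finset.sum_const, nsmul_eq_mul]
      _ ≤ ∑ z ∈ Z, σ * av z := Finset.sum_le_sum ha
  have hQsq : (c * (ε / 2)) ^ 2 ≤ Q * Q := by
    have h1 : (c * (ε/2)) ^ 2 ≤ (σ * Q) ^ 2 := by
      apply pow_le_pow_left₀ (by positivity) hQlow
    have h2 : (σ * Q) ^ 2 = Q * Q := by
      rcases hσ with h | h <;> rw [h] <;> ring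
    linarith [h1, h2.symm.le]
  -- upper bound on P
  have hnear : ∀ z : ℕ, ((Z.filter (fun z' => z' < z + D₀ ∧ z < z' + D₀)).card : ℝ)
      ≤ 2 * (D₀ : ℝ) + 1 := by
    intro z
    have hsub : Z.filter (fun z' => z' < z + D₀ ∧ z < z' + D₀) ⊆ Finset.Icc (z - D₀) (z + D₀) := by
      intro z' hz'
      rw [Finset.mem_filter] at hz'
      rw [Finset.mem_Icc]
      omega
    have := Finset.card_le_card hsub
    have hcard : (Finset.Icc (z - D₀) (z + D₀)).card ≤ 2 * D₀ + 1 := by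
      rw [Nat.card_Icc]; omega
    have : (Z.filter (fun z' => z' < z + D₀ ∧ z < z' + D₀)).card ≤ 2 * D₀ + 1 :=
      le_trans this hcard
    calc ((Z.filter (fun z' => z' < z + D₀ ∧ z < z' + D₀)).card : ℝ)
        ≤ ((2 * D₀ + 1 : ℕ) : ℝ) := by exact_mod_cast this
      _ = 2 * (D₀ : ℝ) + 1 := by push_cast; ring
  have hgram_bd : ∀ z z', (μ (S z ∩ S z')).toReal - b * b
      ≤ ε ^ 2 / 8 + (if z' < z + D₀ ∧ z < z' + D₀ then (1:ℝ) else 0) := by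
    intro z z'
    by_cases hn : z' < z + D₀ ∧ z < z' + D₀
    · have h1 : (μ (S z ∩ S z')).toReal ≤ 1 := by
        have := prob_le_one (μ := μ) (s := S z ∩ S z')
        simpa using ENNReal.toReal_mono (by simp) this
      have h2 : 0 ≤ b * b := mul_nonneg hb0 hb0
      have : 0 ≤ ε ^ 2 / 8 := by positivity
      rw [if_pos hn]
      linarith
    · rw [if_neg hn]
      have hfar' : |(μ (S z ∩ S z')).toReal - b * b| ≤ ε ^ 2 / 8 := by
        rcases (by omega : z + D₀ ≤ z' ∨ z' + D₀ ≤ z) with h | h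
        · exact hfar z z' h
        · rw [Set.inter_comm]; exact hfar z' z h
      have := abs_le.mp hfar'
      linarith [this.2]
  have hPle : P ≤ c * (c * (ε ^ 2 / 8) + (2 * (D₀ : ℝ) + 1)) := by
    have hGGpt : (fun x => G x * G x) = fun x => ∑ z ∈ Z, ∑ z' ∈ Z, f z x * f z' x := by
      funext x; rw [hG_def]; simp only; rw [Finset.sum_mul_sum]
    have hPval : P = ∑ z ∈ Z, ∑ z' ∈ Z, ((μ (S z ∩ S z')).toReal - b * b) := by
      rw [hP_def, hGGpt, integral_finset_sum _
        (fun z _ => integrable_finset_sum _ (fun z' _ => hff_int z z'))]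
      refine Finset.sum_congr rfl (fun z _ => ?_)
      rw [integral_finset_sum _ (fun z' _ => hff_int z z')]
      exact Finset.sum_congr rfl (fun z' _ => hgram z z')
    rw [hPval]
    calc ∑ z ∈ Z, ∑ z' ∈ Z, ((μ (S z ∩ S z')).toReal - b * b)
        ≤ ∑ z ∈ Z, ∑ z' ∈ Z, (ε ^ 2 / 8 + (if z' < z + D₀ ∧ z < z' + D₀ then (1:ℝ) else 0)) := by
          exact Finset.sum_le_sum (fun z _ => Finset.sum_le_sum (fun z' _ => hgram_bd z z'))
      _ = ∑ z ∈ Z, (c * (ε ^ 2 / 8)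
            + ((Z.filter (fun z' => z' < z + D₀ ∧ z < z' + D₀)).card : ℝ)) := by
          refine Finset.sum_congr rfl (fun z _ => ?_)
          rw [Finset.sum_add_distrib, Finset.sum_const, nsmul_eq_mul, Finset.sum_boole]
      _ ≤ ∑ z ∈ Z, (c * (ε ^ 2 / 8) + (2 * (D₀ : ℝ) + 1)) :=
          Finset.sum_le_sum (fun z _ => by linarith [hnear z])
      _ = c * (c * (ε ^ 2 / 8) + (2 * (D₀ : ℝ) + 1)) := by
          rw [Finset.sum_const, nsmul_eq_mul]
  -- combine
  have hmain : c * c * (ε ^ 2 / 8) ≤ c * (2 * (D₀ : ℝ) + 1) := by nlinarith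
  rcases eq_or_lt_of_le hc0 with h0 | h0
  · rw [← h0]; positivity
  · rw [le_div_iff₀ (by positivity)]
    have := (mul_le_mul_iff_of_pos_left h0).mp (by nlinarith : c * (c * (ε ^ 2 / 8)) ≤ c * (2 * (D₀:ℝ) + 1))
    nlinarith


lemma mix_to_real {X : Type*} [MeasurableSpace X] (μ : Measure X) [IsProbabilityMeasure μ]
    (g : ℕ → Set X) (E F : Set X)
    (htd : Tendsto (fun m : ℕ => μ (g m)) atTop (nhds (μ E * μ F))) :
    ∀ η > (0:ℝ), ∃ N : ℕ, ∀ m ≥ N, |(μ (g m)).toReal - (μ E).toReal * (μ F).toReal| ≤ η := by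
  intro η hη
  have hfin : μ E * μ F ≠ ⊤ := ENNReal.mul_ne_top (measure_ne_top μ E) (measure_ne_top μ F)
  have h2 : Tendsto (fun m => (μ (g m)).toReal) atTop (nhds ((μ E * μ F).toReal)) := by
    rw [ENNReal.tendsto_toReal_iff (fun m => measure_ne_top μ _) hfin]; exact htd
  rw [ENNReal.toReal_mul] at h2
  obtain ⟨N, hN⟩ := Metric.tendsto_atTop.mp h2 η hη
  refine ⟨N, fun m hm => ?_⟩
  have := hN m hm
  rw [Real.dist_eq] at this
  linarith


/-- If `T` is mixing then `dev(h) = |Der(ε,A,B,C,h)|/h` is bounded in `h`. -/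
theorem dev_bounded_of_mixing
    {X : Type*} [MeasurableSpace X] (μ : Measure X) [IsProbabilityMeasure μ]
    (T : X ≃ᵐ X) (hT : MeasurePreserving T μ μ)
    (hmix : ∀ A B : Set X, MeasurableSet A → MeasurableSet B →
      Tendsto (fun m : ℕ => μ (A ∩ (⇑T)^[m] '' B)) atTop (nhds (μ A * μ B)))
    (A B C : Set X) (hA : MeasurableSet A) (hB : MeasurableSet B) (hC : MeasurableSet C)
    (ε : ℝ) (hε : 0 < ε) :
    ∃ K : ℝ, ∀ h : ℕ, 1 ≤ h →
      ((Der μ (⇑T) ε A B C h).ncard : ℝ) / h ≤ K := by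
  classical
  obtain ⟨W₀, hW₀⟩ := mix_to_real μ (fun m => A ∩ (⇑T)^[m] '' C) A C (hmix A C hA hC) (ε/2)
    (half_pos hε)
  obtain ⟨D₀, hD₀⟩ := mix_to_real μ (fun m => B ∩ (⇑T)^[m] '' B) B B (hmix B B hB hB) (ε^2/8)
    (by positivity)
  set ra : ℝ := (μ A).toReal with hra
  set b : ℝ := (μ B).toReal with hrb
  set rc : ℝ := (μ C).toReal with hrc
  have hb0 : 0 ≤ b := ENNReal.toReal_nonneg
  have hb1 : b ≤ 1 := by
    have := prob_le_one (μ := μ) (s := B)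
    simpa [hrb] using ENNReal.toReal_mono (by simp) this
  set S : ℕ → Set X := fun z => (⇑T)^[z] '' B with hS_def
  have hSmeas : ∀ z, MeasurableSet (S z) := fun z => iter_img_meas T hB z
  have hbz : ∀ z, (μ (S z)).toReal = b := fun z => by
    rw [hS_def]; simp only; rw [iter_img_measure T hT hB z]
  have hfar : ∀ z z' : ℕ, z + D₀ ≤ z' → |(μ (S z ∩ S z')).toReal - b * b| ≤ ε ^ 2 / 8 := by
    intro z z' hzz
    have hz' : z' = z + (z' - z) := by omega
    rw [hS_def]; simp only
    rw [hz', iter_shift T hT hB hB z (z' - z)]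
    exact hD₀ (z' - z) (by omega)
  set C₂ : ℕ := ⌈(2*(D₀:ℝ)+1)*8/ε^2⌉₊ with hC₂
  set H₀ : ℕ := ⌈(W₀:ℝ)/ε⌉₊ with hH₀
  refine ⟨((H₀:ℝ)+1)^2 + 4*((C₂:ℝ)+1), ?_⟩
  intro h hh1
  have hhpos : (0:ℝ) < h := by exact_mod_cast hh1
  set Dset := Der μ (⇑T) ε A B C h with hDset
  set box : Finset (ℕ × ℕ) := Finset.range (h+1) ×ˢ Finset.range (h+1) with hbox
  have hDsub : ∀ p ∈ Dset, p ∈ box := by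
    intro p hp
    obtain ⟨hq, _⟩ := hp
    rw [hbox, Finset.mem_product, Finset.mem_range, Finset.mem_range]
    exact ⟨Nat.lt_succ_of_le hq.1, Nat.lt_succ_of_le hq.2.1⟩
  set Dfin : Finset (ℕ × ℕ) := box.filter (fun p => p ∈ Dset) with hDfin
  have hco : Dset = ↑Dfin := by
    ext p
    rw [Finset.mem_coe, hDfin, Finset.mem_filter]
    exact ⟨fun hp => ⟨hDsub p hp, hp⟩, fun hp => hp.2⟩
  have hncard : Dset.ncard = Dfin.card := by rw [hco, Set.ncard_coe_finset]
  rw [div_le_iff₀ hhpos, hncard]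
  by_cases hbig : H₀ ≤ h
  · -- main regime: row-by-row bound
    have hrow : ∀ w ∈ Finset.range (h+1),
        (Dfin.filter (fun p => p.2 = w)).card ≤ 2 * C₂ := by
      intro w _
      set R := Dfin.filter (fun p => p.2 = w) with hR
      have hRmem : ∀ p ∈ R, p ∈ Dset ∧ p.2 = w := by
        intro p hp
        rw [hR, Finset.mem_filter, hDfin, Finset.mem_filter] at hp
        exact ⟨hp.1.2, hp.2⟩
      set Zw := R.image Prod.fst with hZw
      have hcardeq : Zw.card = R.card := by
        rw [hZw]
        apply Finset.card_image_of_injOn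
        intro p hp q hq hpq
        have hp2 := (hRmem p (Finset.mem_coe.mp hp)).2
        have hq2 := (hRmem q (Finset.mem_coe.mp hq)).2
        exact Prod.ext hpq (hp2.trans hq2.symm)
      have hzmem : ∀ z ∈ Zw, (z, w) ∈ Dset := by
        intro z hz
        rw [hZw, Finset.mem_image] at hz
        obtain ⟨p, hp, hpz⟩ := hz
        have h1 := hRmem p hp
        have : p = (z, w) := Prod.ext hpz h1.2
        rw [← this]; exact h1.1
      set Wst : Set X := A ∩ (⇑T)^[w] '' C with hWst
      have hWmeas : MeasurableSet Wst := hA.inter (iter_img_meas T hC w)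
      set av : ℕ → ℝ := fun z => (μ (Wst ∩ S z)).toReal - b * (μ Wst).toReal with hav_def
      have hav : ∀ z ∈ Zw, ε/2 ≤ |av z| := by
        intro z hz
        obtain ⟨hq, hdev⟩ := hzmem z hz
        have hwW : W₀ ≤ w := by
          have h1 : ((z, w).2 : ℝ) > ε * h := hq.2.2.2.1
          have h2 : (W₀:ℝ) ≤ ε * H₀ := by
            have := Nat.le_ceil ((W₀:ℝ)/ε)
            rw [← hH₀] at this
            calc (W₀:ℝ) = ε * ((W₀:ℝ)/ε) := by field_simp
              _ ≤ ε * H₀ := by apply mul_le_mul_of_nonneg_left this hε.le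
          have h3 : ε * (H₀:ℝ) ≤ ε * h := by
            apply mul_le_mul_of_nonneg_left _ hε.le
            exact_mod_cast hbig
          have : (W₀:ℝ) ≤ (w:ℝ) := by simp only at h1; linarith
          exact_mod_cast this
        have hmixw := hW₀ w hwW
        have hsetdef : A ∩ (⇑T)^[w] '' C = Wst := by rw [hWst]
        rw [hsetdef] at hmixw
        have hseteq : A ∩ (⇑T)^[(z,w).1] '' B ∩ (⇑T)^[(z,w).2] '' C = Wst ∩ S z := by
          rw [hWst, hS_def]
          simp only
          ext x
          simp only [Set.mem_inter_iff]
          tauto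
        rw [hseteq] at hdev
        have key1 : |b * (μ Wst).toReal - ra * b * rc| ≤ ε/2 := by
          have heq : b * (μ Wst).toReal - ra * b * rc = b * ((μ Wst).toReal - ra * rc) := by ring
          rw [heq, abs_mul, abs_of_nonneg hb0]
          calc b * |(μ Wst).toReal - ra * rc| ≤ 1 * (ε/2) := by
                apply mul_le_mul hb1 hmixw (abs_nonneg _) zero_le_one
            _ = ε/2 := one_mul _
        have key2 : |av z| ≥ |(μ (Wst ∩ S z)).toReal - ra * b * rc|
            - |b * (μ Wst).toReal - ra * b * rc| := by
          have : av z = ((μ (Wst ∩ S z)).toReal - ra * b * rc)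
              - (b * (μ Wst).toReal - ra * b * rc) := by rw [hav_def]; ring
          rw [this]
          exact abs_sub_abs_le_abs_sub _ _
        have hdev' : |(μ (Wst ∩ S z)).toReal - ra * b * rc| > ε := hdev
        linarith
      have hZc : Zw.card ≤ 2 * C₂ := by
        have hsplit := Finset.card_filter_add_card_filter_not
          (s := Zw) (p := fun z => 0 ≤ av z)
        have hCle : (2*(D₀:ℝ)+1)*8/ε^2 ≤ (C₂:ℝ) := by rw [hC₂]; exact Nat.le_ceil _
        have hpls : (Zw.filter (fun z => 0 ≤ av z)).card ≤ C₂ := by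
          have := core_bound μ S hSmeas Wst hWmeas b hb0 hb1 hbz ε hε D₀ hfar 1 (Or.inl rfl)
            (Zw.filter (fun z => 0 ≤ av z)) (fun z hz => by
              rw [Finset.mem_filter] at hz
              have h1 := hav z hz.1
              rw [abs_of_nonneg hz.2] at h1
              rw [one_mul]
              exact h1)
          exact_mod_cast this.trans hCle
        have hmns : (Zw.filter (fun z => ¬ 0 ≤ av z)).card ≤ C₂ := by
          have := core_bound μ S hSmeas Wst hWmeas b hb0 hb1 hbz ε hε D₀ hfar (-1) (Or.inr rfl)
            (Zw.filter (fun z => ¬ 0 ≤ av z)) (fun z hz => by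
              rw [Finset.mem_filter] at hz
              have h1 := hav z hz.1
              have h2 : av z < 0 := lt_of_not_ge hz.2
              rw [abs_of_neg h2] at h1
              linarith)
          exact_mod_cast this.trans hCle
        omega
      omega
    have hfib : Dfin.card = ∑ w ∈ Finset.range (h+1),
        (Dfin.filter (fun p => p.2 = w)).card := by
      apply Finset.card_eq_sum_card_fiberwise
      intro p hp
      rw [Finset.mem_coe, hDfin, Finset.mem_filter, hbox, Finset.mem_product] at hp
      exact Finset.mem_coe.mpr hp.1.2
    have htot : Dfin.card ≤ (h+1) * (2 * C₂) := by
      rw [hfib]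
      calc ∑ w ∈ Finset.range (h+1), (Dfin.filter (fun p => p.2 = w)).card
          ≤ ∑ _w ∈ Finset.range (h+1), 2 * C₂ := Finset.sum_le_sum hrow
        _ = (h+1) * (2*C₂) := by rw [Finset.sum_const, Finset.card_range, smul_eq_mul]
      
    have htotR : (Dfin.card : ℝ) ≤ ((h:ℝ)+1) * (2 * C₂) := by exact_mod_cast htot
    have hh2 : (h:ℝ) + 1 ≤ 2 * h := by
      have : (1:ℝ) ≤ h := by exact_mod_cast hh1
      linarith
    have hC₂0 : (0:ℝ) ≤ (C₂:ℝ) := Nat.cast_nonneg _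
    have hH₀0 : (0:ℝ) ≤ (H₀:ℝ) := Nat.cast_nonneg _
    have hKh : 4*(C₂:ℝ)*h ≤ (((H₀:ℝ)+1)^2 + 4*((C₂:ℝ)+1)) * h := by
      apply mul_le_mul_of_nonneg_right _ hhpos.le
      nlinarith [sq_nonneg ((H₀:ℝ)+1)]
    calc (Dfin.card:ℝ) ≤ ((h:ℝ)+1)*(2*(C₂:ℝ)) := htotR
      _ ≤ (2*(h:ℝ))*(2*(C₂:ℝ)) := mul_le_mul_of_nonneg_right hh2 (by positivity)
      _ = 4*(C₂:ℝ)*h := by ring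
      _ ≤ _ := hKh
  · -- small h regime
    have h1 : Dfin.card ≤ (h+1) * (h+1) := by
      calc Dfin.card ≤ box.card := Finset.card_filter_le _ _
        _ = (h+1) * (h+1) := by rw [hbox, Finset.card_product, Finset.card_range]
    have h2 : (h:ℝ) + 1 ≤ (H₀:ℝ) := by
      have : h + 1 ≤ H₀ := by omega
      exact_mod_cast this
    have h3 : (Dfin.card : ℝ) ≤ ((h:ℝ)+1) * ((h:ℝ)+1) := by exact_mod_cast h1
    have hC₂0 : (0:ℝ) ≤ (C₂:ℝ) := Nat.cast_nonneg _
    have hH₀0 : (0:ℝ) ≤ (H₀:ℝ) := Nat.cast_nonneg _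
    have hKnn : (0:ℝ) ≤ ((H₀:ℝ)+1)^2 + 4*((C₂:ℝ)+1) := by positivity
    calc (Dfin.card:ℝ) ≤ ((h:ℝ)+1)*((h:ℝ)+1) := h3
      _ ≤ (H₀:ℝ)*(H₀:ℝ) := mul_le_mul h2 h2 (by linarith) hH₀0
      _ ≤ ((H₀:ℝ)+1)^2 + 4*((C₂:ℝ)+1) := by nlinarith
      _ = (((H₀:ℝ)+1)^2 + 4*((C₂:ℝ)+1)) * 1 := by ring
      _ ≤ (((H₀:ℝ)+1)^2 + 4*((C₂:ℝ)+1)) * h := by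
          apply mul_le_mul_of_nonneg_left _ hKnn
          exact_mod_cast hh1
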